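/- Let a, b ∈ ℝ with a ≤ b, let h(z) = erf((z − a)/√2) − erf((z − b)/√2), let m = (a + b)/2, and let ž ≤ ẑ be reals. Let z* be the projection (clamp) of m onto [ž, ẑ], i.e., z* = m if m ∈ [ž, ẑ], z* = ž if m < ž, and z* = ẑ if m > ẑ. Then h(z) ≤ h(z*) for every z ∈ [ž, ẑ]. -/

import Mathlib

/-- The Gauss error function `erf x = (2/√π) ∫₀ˣ exp (−t²) dt`. -/
noncomputable def erf (x : ℝ) : ℝ :=
  (2 / Real.sqrt Real.pi) * ∫ t in (0:ℝ)..x, Real.exp (-t ^ 2)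

lemma erf_hasDerivAt (x : ℝ) :
    HasDerivAt erf (2 / Real.sqrt Real.pi * Real.exp (-x ^ 2)) x := by
  have hc : Continuous fun t : ℝ => Real.exp (-t ^ 2) := by continuity
  have h1 : HasDerivAt (fun y => ∫ t in (0:ℝ)..y, Real.exp (-t ^ 2))
      (Real.exp (-x ^ 2)) x :=
    intervalIntegral.integral_hasDerivAt_right (hc.intervalIntegrable _ _)
      (hc.stronglyMeasurableAtFilter _ _) hc.continuousAt
  exact h1.const_mul (2 / Real.sqrt Real.pi)

lemma hfun_hasDerivAt (a b x : ℝ) :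
    HasDerivAt (fun z => erf ((z - a) / Real.sqrt 2) - erf ((z - b) / Real.sqrt 2))
      ((2 / Real.sqrt Real.pi * Real.exp (-((x - a) / Real.sqrt 2) ^ 2)) * (Real.sqrt 2)⁻¹ -
       (2 / Real.sqrt Real.pi * Real.exp (-((x - b) / Real.sqrt 2) ^ 2)) * (Real.sqrt 2)⁻¹) x := by
  have hin1 : HasDerivAt (fun z : ℝ => (z - a) / Real.sqrt 2) (Real.sqrt 2)⁻¹ x := by
    simpa [one_div] using ((hasDerivAt_id x).sub_const a).div_const (Real.sqrt 2)
  have hin2 : HasDerivAt (fun z : ℝ => (z - b) / Real.sqrt 2) (Real.sqrt 2)⁻¹ x := by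
    simpa [one_div] using ((hasDerivAt_id x).sub_const b).div_const (Real.sqrt 2)
  exact ((erf_hasDerivAt _).comp x hin1).sub ((erf_hasDerivAt _).comp x hin2)

lemma hfun_mono (a b : ℝ) (hab : a ≤ b) :
    MonotoneOn (fun z => erf ((z - a) / Real.sqrt 2) - erf ((z - b) / Real.sqrt 2))
      (Set.Iic ((a + b) / 2)) := by
  apply monotoneOn_of_deriv_nonneg (convex_Iic _)
  · exact fun x _ => ((hfun_hasDerivAt a b x).continuousAt).continuousWithinAt
  · exact fun x _ => (hfun_hasDerivAt a b x).differentiableAt.differentiableWithinAt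
  · intro x hx
    rw [interior_Iic] at hx
    rw [(hfun_hasDerivAt a b x).deriv]
    have h2 : (0:ℝ) < Real.sqrt 2 := by positivity
    have hpi : (0:ℝ) < Real.sqrt Real.pi := Real.sqrt_pos.2 Real.pi_pos
    have hle : ((x - a) / Real.sqrt 2) ^ 2 ≤ ((x - b) / Real.sqrt 2) ^ 2 := by
      rw [div_pow, div_pow, div_le_div_iff₀ (by positivity) (by positivity),
        Real.sq_sqrt (by norm_num : (2:ℝ) ≥ 0)]
      have hxm : x < (a + b) / 2 := hx
      nlinarith [mul_nonneg (sub_nonneg.2 hab) (by linarith : a + b - 2 * x ≥ 0)]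
    have := Real.exp_le_exp.2 (neg_le_neg hle)
    have hkey : 2 / Real.sqrt Real.pi * Real.exp (-((x - b) / Real.sqrt 2) ^ 2) ≤
        2 / Real.sqrt Real.pi * Real.exp (-((x - a) / Real.sqrt 2) ^ 2) := by
      apply mul_le_mul_of_nonneg_left this (by positivity)
    nlinarith [inv_pos.2 h2]

lemma hfun_anti (a b : ℝ) (hab : a ≤ b) :
    AntitoneOn (fun z => erf ((z - a) / Real.sqrt 2) - erf ((z - b) / Real.sqrt 2))
      (Set.Ici ((a + b) / 2)) := by
  apply antitoneOn_of_deriv_nonpos (convex_Ici _)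
  · exact fun x _ => ((hfun_hasDerivAt a b x).continuousAt).continuousWithinAt
  · exact fun x _ => (hfun_hasDerivAt a b x).differentiableAt.differentiableWithinAt
  · intro x hx
    rw [interior_Ici] at hx
    rw [(hfun_hasDerivAt a b x).deriv]
    have h2 : (0:ℝ) < Real.sqrt 2 := by positivity
    have hpi : (0:ℝ) < Real.sqrt Real.pi := Real.sqrt_pos.2 Real.pi_pos
    have hle : ((x - b) / Real.sqrt 2) ^ 2 ≤ ((x - a) / Real.sqrt 2) ^ 2 := by
      rw [div_pow, div_pow, div_le_div_iff₀ (by positivity) (by positivity),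
        Real.sq_sqrt (by norm_num : (2:ℝ) ≥ 0)]
      have hxm : (a + b) / 2 < x := hx
      nlinarith [mul_nonneg (sub_nonneg.2 hab) (by linarith : 2 * x - (a + b) ≥ 0)]
    have := Real.exp_le_exp.2 (neg_le_neg hle)
    have hkey : 2 / Real.sqrt Real.pi * Real.exp (-((x - a) / Real.sqrt 2) ^ 2) ≤
        2 / Real.sqrt Real.pi * Real.exp (-((x - b) / Real.sqrt 2) ^ 2) := by
      apply mul_le_mul_of_nonneg_left this (by positivity)
    nlinarith [inv_pos.2 h2]

/-- the maximum of `h z = erf((z−a)/√2) − erf((z−b)/√2)` over an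
interval `[ž, ẑ]` of candidate means is attained at the clamp of the midpoint
`m = (a+b)/2` onto `[ž, ẑ]`. -/
theorem erf_diff_max_at_clamp
    (a b : ℝ) (hab : a ≤ b) (zlo zhi : ℝ) (hz : zlo ≤ zhi)
    (zstar : ℝ)
    (hstar : zstar =
      if (a + b) / 2 < zlo then zlo
      else if zhi < (a + b) / 2 then zhi
      else (a + b) / 2) :
    ∀ z ∈ Set.Icc zlo zhi,
      erf ((z - a) / Real.sqrt 2) - erf ((z - b) / Real.sqrt 2) ≤
        erf ((zstar - a) / Real.sqrt 2) - erf ((zstar - b) / Real.sqrt 2) := by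
  intro z hzz
  obtain ⟨hz1, hz2⟩ := hzz
  by_cases h1 : (a + b) / 2 < zlo
  · rw [hstar, if_pos h1]
    exact hfun_anti a b hab h1.le (h1.trans_le hz1).le hz1
  · push_neg at h1
    by_cases h2 : zhi < (a + b) / 2
    · rw [hstar, if_neg (not_lt.2 h1), if_pos h2]
      exact hfun_mono a b hab (hz2.trans h2.le) h2.le hz2
    · push_neg at h2
      rw [hstar, if_neg (not_lt.2 h1), if_neg (not_lt.2 h2)]
      rcases le_total z ((a + b) / 2) with hc | hc
      · exact hfun_mono a b hab hc Set.self_mem_Iic hc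
      · exact hfun_anti a b hab Set.self_mem_Ici hc hc
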